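/- Let G be a group with computable operations, and suppose uv ≠ 1 in G and both pairs ([1]_G,[u]_G) and ([1]_G,[v]_G) are effectively inseparable. Then ([1]_G, [uv]_G) is effectively inseparable. -/

import Mathlib

/-- The c.e. set with index `e` in a standard enumeration. -/
def WSet (e : ℕ) : Set ℕ := {n | ((Denumerable.ofNat Nat.Partrec.Code e).eval n).Dom}

/-- A set of naturals is computably enumerable. -/
def CeSet (A : Set ℕ) : Prop := ∃ e : ℕ, A = WSet e

/-- Product of two sets of naturals under the standard pairing. -/
def ProdSet (A C : Set ℕ) : Set ℕ := {p | p.unpair.1 ∈ A ∧ p.unpair.2 ∈ C}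

/-- `(A, B)` is an effectively inseparable pair. -/
def EffInsep (A B : Set ℕ) : Prop :=
  ∃ ψ : ℕ →. ℕ, Partrec ψ ∧
    ∀ u v : ℕ, A ⊆ WSet u → B ⊆ WSet v → WSet u ∩ WSet v = ∅ →
      ∃ z ∈ ψ (Nat.pair u v), z ∉ WSet u ∪ WSet v

open Nat.Partrec (Code)
open Nat.Partrec.Code

lemma mem_wset_code (cd : Code) (n : ℕ) :
    n ∈ WSet (Encodable.encode cd) ↔ (cd.eval n).Dom := by
  simp [WSet, Denumerable.ofNat_encode]

lemma partrec_eval (cd : Code) : Partrec cd.eval :=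
  eval_part.comp (Computable.const cd) Computable.id

/-- Dom of the "conditional membership" partial function used in the construction. -/
lemma cond_dom (e : ℕ) (cd : Code) (x y : ℕ) :
    ((((Denumerable.ofNat Code e).eval x).bind fun _ =>
      (cd.eval x).bind fun w =>
        ((if w = y then some 0 else none : Option ℕ) : Part ℕ)).Dom
      ↔ (x ∈ WSet e ∧ y ∈ cd.eval x)) := by
  constructor
  · intro h
    obtain ⟨z, hz⟩ := Part.dom_iff_mem.1 h
    rw [Part.mem_bind_iff] at hz
    obtain ⟨a, ha, hz⟩ := hz
    rw [Part.mem_bind_iff] at hz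
    obtain ⟨w, hw, hz⟩ := hz
    have hwy : w = y := by
      by_contra hne
      simp [hne] at hz
    exact ⟨Part.dom_iff_mem.2 ⟨a, ha⟩, hwy ▸ hw⟩
  · rintro ⟨hx, hy⟩
    obtain ⟨a, ha⟩ := Part.dom_iff_mem.1 hx
    exact Part.dom_iff_mem.2
      ⟨0, Part.mem_bind_iff.2 ⟨a, ha, Part.mem_bind_iff.2 ⟨y, hy, by simp⟩⟩⟩

theorem stmt10 (G : Type) [Group G] (c : G ≃ ℕ)
    (hmul : Computable₂ fun a b : ℕ => c (c.symm a * c.symm b))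
    (hinv : Computable fun a : ℕ => c (c.symm a)⁻¹)
    (N : Subgroup G) (hN : N.Normal)
    (u v : G)
    (cls : G → Set ℕ) (hcls : ∀ h : G, cls h = {x | c.symm x * h⁻¹ ∈ N})
    (hce : ∀ h : G, CeSet (cls h))
    (huv : u * v ∉ N)  -- `uv ≠ 1` in `G`
    (hu : EffInsep (cls 1) (cls u)) (hv : EffInsep (cls 1) (cls v)) :
    EffInsep (cls 1) (cls (u * v)) := by
  classical
  have hmem : ∀ (h : G) (x : ℕ), x ∈ cls h ↔ c.symm x * h⁻¹ ∈ N := by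
    intro h x; rw [hcls h]; exact Iff.rfl
  by_cases hu' : u ∈ N
  · have he : cls (u * v) = cls v := by
      ext x
      rw [hmem, hmem]
      have key : c.symm x * (u * v)⁻¹ = c.symm x * v⁻¹ * u⁻¹ := by group
      rw [key]
      exact N.mul_mem_cancel_right (N.inv_mem hu')
    rw [he]; exact hv
  by_cases hv' : v ∈ N
  · have he : cls (u * v) = cls u := by
      ext x
      rw [hmem, hmem]
      have key : c.symm x * (u * v)⁻¹ = c.symm x * u⁻¹ * (u * v⁻¹ * u⁻¹) := by group
      rw [key]
      exact N.mul_mem_cancel_right (hN.conj_mem _ (N.inv_mem hv') u)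
    rw [he]; exact hu
  -- main case : u ∉ N and v ∉ N
  obtain ⟨ψ₁, hψ₁, H₁⟩ := hu
  obtain ⟨ψ₂, hψ₂, H₂⟩ := hv
  obtain ⟨e₁, hE₁⟩ := hce 1
  obtain ⟨eU, hEU⟩ := hce u
  obtain ⟨eV, hEV⟩ := hce v
  have hd1 : ∀ w : G, w ∉ N → ∀ x : ℕ, x ∈ cls 1 → x ∈ cls w → False := by
    intro w hw x h1 h2
    rw [hmem] at h1 h2
    apply hw
    have h1' : c.symm x ∈ N := by simpa using h1
    have hwi : w⁻¹ ∈ N := by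
      have := N.mul_mem (N.inv_mem h1') h2
      rwa [inv_mul_cancel_left] at this
    simpa using N.inv_mem hwi
  have hdU := hd1 u hu'
  have hdV := hd1 v hv'
  have hmulcls : ∀ (g h : G) (x y : ℕ), x ∈ cls g → y ∈ cls h →
      c (c.symm x * c.symm y) ∈ cls (g * h) := by
    intro g h x y hx hy
    rw [hmem] at hx hy ⊢
    rw [Equiv.symm_apply_apply]
    have key : c.symm x * c.symm y * (g * h)⁻¹
        = (c.symm x * g⁻¹) * (g * (c.symm y * h⁻¹) * g⁻¹) := by group
    rw [key]
    exact N.mul_mem hx (hN.conj_mem _ hy g)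
  -- the coded multiplication function
  set Mf : ℕ → ℕ := fun n => c (c.symm n.unpair.1 * c.symm n.unpair.2) with hMfdef
  have hMf : Computable Mf :=
    hmul.comp ((Primrec.fst.comp Primrec.unpair).to_comp)
      ((Primrec.snd.comp Primrec.unpair).to_comp)
  have hMfeq : ∀ x y : ℕ, Mf (Nat.pair x y) = c (c.symm x * c.symm y) := by
    intro x y; simp [hMfdef]
  -- computable projections
  have hunp1 : Computable fun m : ℕ => m.unpair.1 := (Primrec.fst.comp Primrec.unpair).to_comp
  have hunp2 : Computable fun m : ℕ => m.unpair.2 := (Primrec.snd.comp Primrec.unpair).to_comp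
  have hunp12 : Computable fun m : ℕ => m.unpair.1.unpair.2 :=
    (Primrec.snd.comp (Primrec.unpair.comp (Primrec.fst.comp Primrec.unpair))).to_comp
  have hunp11 : Computable fun m : ℕ => m.unpair.1.unpair.1 :=
    (Primrec.fst.comp (Primrec.unpair.comp (Primrec.fst.comp Primrec.unpair))).to_comp
  -- the two semideciders to be merged, as functions of e
  have hmemF : ∀ e : ℕ, Partrec fun m : ℕ => ((Denumerable.ofNat Code e).eval m.unpair.2) :=
    fun e => (partrec_eval _).comp hunp2
  have hcond : ∀ e : ℕ, Partrec fun m : ℕ =>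
      (((Denumerable.ofNat Code e).eval m.unpair.1.unpair.2).bind fun _ =>
        ((Denumerable.ofNat Code m.unpair.1.unpair.1).eval m.unpair.1.unpair.2).bind fun w =>
          ((if w = m.unpair.2 then some 0 else none : Option ℕ) : Part ℕ)) := by
    intro e
    have hpred : PrimrecPred fun q : (ℕ × ℕ) × ℕ => q.2 = q.1.1.unpair.2 :=
      Primrec.eq.comp Primrec.snd
        ((Primrec.snd.comp Primrec.unpair).comp (Primrec.fst.comp Primrec.fst))
    have h3 : Partrec fun q : (ℕ × ℕ) × ℕ =>
        ((if q.2 = q.1.1.unpair.2 then some 0 else none : Option ℕ) : Part ℕ) :=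
      Computable.ofOption
        ((Primrec.ite hpred (Primrec.const (some 0)) (Primrec.const none)).to_comp)
    have h2 : Partrec fun p : ℕ × ℕ =>
        ((Denumerable.ofNat Code p.1.unpair.1.unpair.1).eval p.1.unpair.1.unpair.2).bind fun w =>
          ((if w = p.1.unpair.2 then some 0 else none : Option ℕ) : Part ℕ) :=
      Partrec.bind
        (eval_part.comp (((Primrec.ofNat Code).to_comp).comp (hunp11.comp Computable.fst))
          (hunp12.comp Computable.fst))
        h3.to₂
    exact Partrec.bind ((partrec_eval _).comp hunp12) h2.to₂
  obtain ⟨kG, hkG, HkG⟩ := Partrec.merge' (hmemF e₁) (hcond eU)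
  obtain ⟨kH, hkH, HkH⟩ := Partrec.merge' (hmemF eV) (hcond e₁)
  obtain ⟨dG, hdG⟩ := exists_code.1 (Partrec.nat_iff.1 hkG)
  obtain ⟨dH, hdH⟩ := exists_code.1 (Partrec.nat_iff.1 hkH)
  set Gc : Code → ℕ → ℕ :=
    fun cd x => Encodable.encode (dG.curry (Nat.pair (Encodable.encode cd) x)) with hGcdef
  set Hc : Code → ℕ → ℕ :=
    fun cd x => Encodable.encode (dH.curry (Nat.pair (Encodable.encode cd) x)) with hHcdef
  have hGcomp : Computable₂ Gc :=
    ((Primrec.encode.comp (primrec₂_curry.comp (Primrec.const dG)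
      (Primrec₂.natPair.comp (Primrec.encode.comp Primrec.fst) Primrec.snd))).to₂).to_comp
  have hHcomp : Computable₂ Hc :=
    ((Primrec.encode.comp (primrec₂_curry.comp (Primrec.const dH)
      (Primrec₂.natPair.comp (Primrec.encode.comp Primrec.fst) Primrec.snd))).to₂).to_comp
  -- the fixed point
  have hfF : Partrec₂ fun (cd : Code) (x : ℕ) => ψ₂ (Nat.pair (Gc cd x) (Hc cd x)) := by
    have h1 : Partrec fun p : Code × ℕ => ψ₂ (Nat.pair (Gc p.1 p.2) (Hc p.1 p.2)) :=
      hψ₂.comp (Primrec₂.natPair.to_comp.comp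
        (hGcomp.comp Computable.fst Computable.snd)
        (hHcomp.comp Computable.fst Computable.snd))
    exact h1.to₂
  obtain ⟨c₀, hc₀⟩ := fixed_point₂ hfF
  have hfc : ∀ x : ℕ, c₀.eval x = ψ₂ (Nat.pair (Gc c₀ x) (Hc c₀ x)) := by
    intro x; rw [hc₀]
  -- description of the constructed c.e. sets
  have hWG : ∀ x y : ℕ,
      y ∈ WSet (Gc c₀ x) ↔ (y ∈ cls 1 ∨ (x ∈ cls u ∧ y ∈ c₀.eval x)) := by
    intro x y
    have h1 : y ∈ WSet (Gc c₀ x) ↔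
        (kG (Nat.pair (Nat.pair (Encodable.encode c₀) x) y)).Dom := by
      rw [hGcdef]
      rw [mem_wset_code, eval_curry, hdG]
    rw [h1, (HkG _).2]
    simp only [Nat.unpair_pair, Denumerable.ofNat_encode]
    rw [cond_dom]
    rw [hE₁, hEU]
    exact Iff.rfl
  have hWH : ∀ x y : ℕ,
      y ∈ WSet (Hc c₀ x) ↔ (y ∈ cls v ∨ (x ∈ cls 1 ∧ y ∈ c₀.eval x)) := by
    intro x y
    have h1 : y ∈ WSet (Hc c₀ x) ↔
        (kH (Nat.pair (Nat.pair (Encodable.encode c₀) x) y)).Dom := by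
      rw [hHcdef]
      rw [mem_wset_code, eval_curry, hdH]
    rw [h1, (HkH _).2]
    simp only [Nat.unpair_pair, Denumerable.ofNat_encode]
    rw [cond_dom]
    rw [hEV, hE₁]
    exact Iff.rfl
  -- totality of the fixed-point function
  have htot : ∀ x : ℕ, (c₀.eval x).Dom := by
    intro x
    by_contra hdom
    have hnm : ∀ y : ℕ, y ∉ c₀.eval x := fun y hy => hdom (Part.dom_iff_mem.2 ⟨y, hy⟩)
    have hGx : cls 1 ⊆ WSet (Gc c₀ x) := fun y hy => (hWG x y).2 (Or.inl hy)
    have hHx : cls v ⊆ WSet (Hc c₀ x) := fun y hy => (hWH x y).2 (Or.inl hy)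
    have hdisj : WSet (Gc c₀ x) ∩ WSet (Hc c₀ x) = ∅ := by
      ext y
      simp only [Set.mem_inter_iff, Set.mem_empty_iff_false, iff_false, not_and]
      intro h1 h2
      rcases (hWG x y).1 h1 with h1' | ⟨_, h1'⟩
      · rcases (hWH x y).1 h2 with h2' | ⟨_, h2'⟩
        · exact hdV y h1' h2'
        · exact hnm y h2'
      · exact hnm y h1'
    obtain ⟨z, hz, _⟩ := H₂ _ _ hGx hHx hdisj
    exact hnm z (by rw [hfc x]; exact hz)
  set tv : ℕ → ℕ := fun x => (c₀.eval x).get (htot x) with htvdef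
  have htv : ∀ x, tv x ∈ c₀.eval x := fun x => Part.get_mem _
  have hmemt : ∀ x y, y ∈ c₀.eval x ↔ y = tv x :=
    fun x y => ⟨fun hy => Part.mem_unique hy (htv x), fun h => h ▸ htv x⟩
  -- the reduction property of `tv`
  have hval1 : ∀ x, x ∈ cls 1 → tv x ∈ cls 1 := by
    intro x hx
    by_contra hbad
    have hxU : x ∉ cls u := fun hxu => hdU x hx hxu
    have hGx : ∀ y, y ∈ WSet (Gc c₀ x) ↔ y ∈ cls 1 := by
      intro y; rw [hWG]; simp [hxU]
    have hHx : ∀ y, y ∈ WSet (Hc c₀ x) ↔ (y ∈ cls v ∨ y = tv x) := by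
      intro y; rw [hWH]; simp [hx, hmemt]
    have hdisj : WSet (Gc c₀ x) ∩ WSet (Hc c₀ x) = ∅ := by
      ext y
      simp only [Set.mem_inter_iff, Set.mem_empty_iff_false, iff_false, not_and]
      intro h1 h2
      rcases (hHx y).1 h2 with h2' | rfl
      · exact hdV y ((hGx y).1 h1) h2'
      · exact hbad ((hGx _).1 h1)
    obtain ⟨z, hz, hzn⟩ := H₂ _ _ (fun y hy => (hGx y).2 hy)
      (fun y hy => (hHx y).2 (Or.inl hy)) hdisj
    have hzt : z = tv x := (hmemt x z).1 (by rw [hfc x]; exact hz)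
    exact hzn (Or.inr ((hHx z).2 (Or.inr hzt)))
  have hvalU : ∀ x, x ∈ cls u → tv x ∈ cls v := by
    intro x hx
    by_contra hbad
    have hx1 : x ∉ cls 1 := fun hx1 => hdU x hx1 hx
    have hGx : ∀ y, y ∈ WSet (Gc c₀ x) ↔ (y ∈ cls 1 ∨ y = tv x) := by
      intro y; rw [hWG]; simp [hx, hmemt]
    have hHx : ∀ y, y ∈ WSet (Hc c₀ x) ↔ y ∈ cls v := by
      intro y; rw [hWH]; simp [hx1]
    have hdisj : WSet (Gc c₀ x) ∩ WSet (Hc c₀ x) = ∅ := by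
      ext y
      simp only [Set.mem_inter_iff, Set.mem_empty_iff_false, iff_false, not_and]
      intro h1 h2
      rcases (hGx y).1 h1 with h1' | rfl
      · exact hdV y h1' ((hHx y).1 h2)
      · exact hbad ((hHx _).1 h2)
    obtain ⟨z, hz, hzn⟩ := H₂ _ _ (fun y hy => (hGx y).2 (Or.inl hy))
      (fun y hy => (hHx y).2 hy) hdisj
    have hzt : z = tv x := (hmemt x z).1 (by rw [hfc x]; exact hz)
    exact hzn (Or.inl ((hGx z).2 (Or.inr hzt)))
  -- the final effective inseparability function
  set pt : ℕ →. ℕ := fun x => (c₀.eval x).map fun y => Mf (Nat.pair x y) with hptdef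
  have hpt : Partrec pt := by
    apply Partrec.map (partrec_eval c₀)
    exact (hMf.comp (Primrec₂.natPair.to_comp.comp Computable.fst Computable.snd)).to₂
  have hptval : ∀ x, pt x = Part.some (Mf (Nat.pair x (tv x))) := by
    intro x
    have hsome : c₀.eval x = Part.some (tv x) := (Part.some_get (htot x)).symm
    show Part.map (fun y => Mf (Nat.pair x y)) (c₀.eval x) = _
    rw [hsome, Part.map_some]
  obtain ⟨cPT, hcPT⟩ := exists_code.1 (Partrec.nat_iff.1 hpt)
  set idx : ℕ → ℕ :=
    fun w => Encodable.encode (Code.comp (Denumerable.ofNat Code w) cPT) with hidxdef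
  have hidxc : Computable idx :=
    (Primrec.encode.comp (primrec₂_comp.comp (Primrec.ofNat Code) (Primrec.const cPT))).to_comp
  have hWidx : ∀ w n : ℕ, n ∈ WSet (idx w) ↔ Mf (Nat.pair n (tv n)) ∈ WSet w := by
    intro w n
    rw [hidxdef]
    rw [mem_wset_code]
    have heq : (Code.comp (Denumerable.ofNat Code w) cPT).eval n
        = (Denumerable.ofNat Code w).eval (Mf (Nat.pair n (tv n))) := by
      show (cPT.eval n).bind _ = _
      rw [hcPT, hptval n]
      exact Part.bind_some _ _
    rw [heq]
    exact Iff.rfl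
  have hψF : Partrec fun n : ℕ =>
      (ψ₁ (Nat.pair (idx n.unpair.1) (idx n.unpair.2))).bind fun z =>
        (c₀.eval z).map fun y => Mf (Nat.pair z y) := by
    have hg : Partrec₂ fun (_ : ℕ) (z : ℕ) =>
        (c₀.eval z).map fun y => Mf (Nat.pair z y) := by
      have h1 : Partrec fun p : ℕ × ℕ => (c₀.eval p.2).map fun y => Mf (Nat.pair p.2 y) :=
        Partrec.map ((partrec_eval c₀).comp Computable.snd)
          (hMf.comp (Primrec₂.natPair.to_comp.comp
            (Computable.snd.comp Computable.fst) Computable.snd)).to₂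
      exact h1.to₂
    exact Partrec.bind
      (hψ₁.comp (Primrec₂.natPair.to_comp.comp (hidxc.comp hunp1) (hidxc.comp hunp2))) hg
  refine ⟨_, hψF, ?_⟩
  intro a b hA hB hAB
  have hSa : cls 1 ⊆ WSet (idx a) := by
    intro x hx
    apply (hWidx a x).2
    apply hA
    have := hmulcls 1 1 x (tv x) hx (hval1 x hx)
    rw [one_mul] at this
    rw [hMfeq]
    exact this
  have hTb : cls u ⊆ WSet (idx b) := by
    intro x hx
    apply (hWidx b x).2
    apply hB
    have := hmulcls u v x (tv x) hx (hvalU x hx)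
    rw [hMfeq]
    exact this
  have hdisj : WSet (idx a) ∩ WSet (idx b) = ∅ := by
    ext n
    simp only [Set.mem_inter_iff, Set.mem_empty_iff_false, iff_false, not_and]
    intro h1 h2
    have : Mf (Nat.pair n (tv n)) ∈ WSet a ∩ WSet b :=
      ⟨(hWidx a n).1 h1, (hWidx b n).1 h2⟩
    rw [hAB] at this
    exact this
  obtain ⟨z, hz, hzn⟩ := H₁ _ _ hSa hTb hdisj
  refine ⟨Mf (Nat.pair z (tv z)), ?_, ?_⟩
  · show _ ∈ Part.bind _ _
    simp only [Nat.unpair_pair]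
    exact Part.mem_bind_iff.2 ⟨z, hz, (Part.mem_map_iff _).2 ⟨tv z, htv z, rfl⟩⟩
  · intro hmem
    rcases hmem with h | h
    · exact hzn (Or.inl ((hWidx a z).2 h))
    · exact hzn (Or.inr ((hWidx b z).2 h))
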